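/- Let S be a UPB in a bipartite Hilbert space H = H_A ⊗ H_B. Then the state ρ̄ proportional to the projector onto span(S)^⊥ is entangled, i.e., ρ̄ is not a convex combination of projectors onto product states. -/

import Mathlib

open Finset

private lemma quad_vmv {I : Type*} [Fintype I] (u v w : I → ℂ) :
    ∑ p, ∑ q, (starRingEnd ℂ) (u p) * (Matrix.vecMulVec v (star w)) p q * u q
      = (∑ p, (starRingEnd ℂ) (u p) * v p) * (∑ q, (starRingEnd ℂ) (w q) * u q) := by
  rw [Finset.sum_mul_sum]
  refine Finset.sum_congr rfl fun p _ => Finset.sum_congr rfl fun q _ => ?_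
  simp [Matrix.vecMulVec_apply, Pi.star_apply]
  ring

private lemma swap_inner_sum {I K : Type*} [Fintype I] [Fintype K] (F : I → I → K → ℂ) :
    ∑ p : I, ∑ q : I, ∑ k : K, F p q k = ∑ k : K, ∑ p : I, ∑ q : I, F p q k := by
  have h1 : ∀ p : I, ∑ q : I, ∑ k : K, F p q k = ∑ k : K, ∑ q : I, F p q k :=
    fun p => Finset.sum_comm
  simp only [h1]
  exact Finset.sum_comm

private lemma quad_expand {I K : Type*} [Fintype I] [DecidableEq I] [Fintype K]
    (u : I → ℂ) (c : ℂ) (w : K → I → ℂ) :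
    ∑ p, ∑ q, (starRingEnd ℂ) (u p) *
        (c • ((1 : Matrix I I ℂ) - ∑ k, Matrix.vecMulVec (w k) (star (w k)))) p q * u q
      = c * ((∑ p, (starRingEnd ℂ) (u p) * u p)
          - ∑ k, (∑ p, (starRingEnd ℂ) (u p) * w k p) * (∑ q, (starRingEnd ℂ) (w k q) * u q)) := by
  have point : ∀ p q : I, (starRingEnd ℂ) (u p) *
      (c • ((1 : Matrix I I ℂ) - ∑ k, Matrix.vecMulVec (w k) (star (w k)))) p q * u q
      = c * ((starRingEnd ℂ) (u p) * (1 : Matrix I I ℂ) p q * u q)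
        - ∑ k, c * ((starRingEnd ℂ) (u p) * (Matrix.vecMulVec (w k) (star (w k))) p q * u q) := by
    intro p q
    rw [Matrix.smul_apply, smul_eq_mul, Matrix.sub_apply, Matrix.sum_apply]
    rw [show (starRingEnd ℂ) (u p) *
        (c * ((1 : Matrix I I ℂ) p q - ∑ k, (Matrix.vecMulVec (w k) (star (w k))) p q)) * u q
      = c * ((starRingEnd ℂ) (u p) * (1 : Matrix I I ℂ) p q * u q)
        - c * ((starRingEnd ℂ) (u p) * (∑ k, (Matrix.vecMulVec (w k) (star (w k))) p q) * u q)
      from by ring]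
    rw [Finset.mul_sum, Finset.sum_mul, Finset.mul_sum]
  simp only [point, Finset.sum_sub_distrib, ← Finset.mul_sum]
  rw [mul_sub]
  congr 1
  · congr 1
    refine Finset.sum_congr rfl fun p _ => ?_
    simp [Matrix.one_apply, mul_ite, ite_mul]
  · congr 1
    rw [swap_inner_sum]
    exact Finset.sum_congr rfl fun k _ => quad_vmv u (w k) (w k)

private lemma quad_dec {I K : Type*} [Fintype I] [Fintype K]
    (u : I → ℂ) (c : K → ℂ) (v : K → I → ℂ) :
    ∑ P, ∑ Q, (starRingEnd ℂ) (u P) *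
        (∑ i, c i • Matrix.vecMulVec (v i) (star (v i))) P Q * u Q
      = ∑ i, c i * ((∑ P, (starRingEnd ℂ) (u P) * v i P) * (∑ Q, (starRingEnd ℂ) (v i Q) * u Q)) := by
  have point : ∀ P Q : I, (starRingEnd ℂ) (u P) *
      (∑ i, c i • Matrix.vecMulVec (v i) (star (v i))) P Q * u Q
      = ∑ i, c i * ((starRingEnd ℂ) (u P) * (Matrix.vecMulVec (v i) (star (v i))) P Q * u Q) := by
    intro P Q
    rw [Matrix.sum_apply, Finset.mul_sum, Finset.sum_mul]
    refine Finset.sum_congr rfl fun i _ => ?_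
    rw [Matrix.smul_apply, smul_eq_mul]; ring
  simp only [point]
  rw [swap_inner_sum]
  refine Finset.sum_congr rfl fun i _ => ?_
  rw [← quad_vmv u (v i) (v i), Finset.mul_sum]
  refine Finset.sum_congr rfl fun P _ => ?_
  rw [Finset.mul_sum]

private lemma tr_expand {I K : Type*} [Fintype I] [DecidableEq I] [Fintype K] (c : ℂ) (w : K → I → ℂ) :
    ∑ q, (c • ((1 : Matrix I I ℂ) - ∑ k, Matrix.vecMulVec (w k) (star (w k)))) q q
      = c * ((Fintype.card I : ℂ) - ∑ k, ∑ q, (starRingEnd ℂ) (w k q) * w k q) := by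
  simp only [Matrix.smul_apply, Matrix.sub_apply, Matrix.sum_apply, smul_eq_mul,
    Matrix.one_apply_eq, Matrix.vecMulVec_apply, Pi.star_apply, RCLike.star_def]
  rw [← Finset.mul_sum, Finset.sum_sub_distrib, Finset.sum_comm]
  simp only [Finset.sum_const, Finset.card_univ, nsmul_eq_mul, mul_one]
  congr 2
  exact Finset.sum_congr rfl fun k _ => Finset.sum_congr rfl fun q _ => mul_comm _ _

private lemma tr_dec {I K : Type*} [Fintype I] [Fintype K] (c : K → ℂ) (v : K → I → ℂ) :
    ∑ q, (∑ i, c i • Matrix.vecMulVec (v i) (star (v i))) q q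
      = ∑ i, c i * ∑ q, (starRingEnd ℂ) (v i q) * v i q := by
  simp only [Matrix.sum_apply, Matrix.smul_apply, smul_eq_mul, Matrix.vecMulVec_apply,
    Pi.star_apply, RCLike.star_def]
  rw [Finset.sum_comm]
  refine Finset.sum_congr rfl fun i _ => ?_
  rw [Finset.mul_sum]
  exact Finset.sum_congr rfl fun q _ => by ring

/-- For a UPB S = {ψ_j = α_j ⊗ β_j} in ℂ^{dA} ⊗ ℂ^{dB}, the state ρ̄ proportional
to the projector onto span(S)^⊥ is entangled: it is not a convex combination of
projectors onto product states. -/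
theorem stmt7 (dA dB n : ℕ)
    (α : Fin n → EuclideanSpace ℂ (Fin dA)) (β : Fin n → EuclideanSpace ℂ (Fin dB))
    (ψ : Fin n → (Fin dA × Fin dB) → ℂ)
    (hψ : ∀ j p, ψ j p = α j p.1 * β j p.2)
    (horthonormal : ∀ j k, (∑ p : Fin dA × Fin dB, (starRingEnd ℂ) (ψ j p) * ψ k p)
        = if j = k then 1 else 0)
    (hupb : ¬ ∃ (a : EuclideanSpace ℂ (Fin dA)) (b : EuclideanSpace ℂ (Fin dB)),
        a ≠ 0 ∧ b ≠ 0 ∧ ∀ j, (inner ℂ a (α j) : ℂ) = 0 ∨ (inner ℂ b (β j) : ℂ) = 0)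
    (hn : n < dA * dB)
    (ρ : Matrix (Fin dA × Fin dB) (Fin dA × Fin dB) ℂ)
    (hρ : ρ = (((dA * dB - n : ℕ) : ℂ))⁻¹ •
        ((1 : Matrix (Fin dA × Fin dB) (Fin dA × Fin dB) ℂ)
          - ∑ j, Matrix.vecMulVec (ψ j) (star (ψ j)))) :
    ¬ ∃ (N : ℕ) (p : Fin N → ℝ) (a : Fin N → EuclideanSpace ℂ (Fin dA))
        (b : Fin N → EuclideanSpace ℂ (Fin dB)),
        (∀ i, 0 ≤ p i) ∧
        ρ = ∑ i, (p i : ℂ) • Matrix.vecMulVec (fun q : Fin dA × Fin dB => a i q.1 * b i q.2)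
              (star (fun q : Fin dA × Fin dB => a i q.1 * b i q.2)) := by
  rintro ⟨N, p, a, b, hp, hdec⟩
  classical
  set v : Fin N → (Fin dA × Fin dB) → ℂ := fun i q => a i q.1 * b i q.2 with hv
  have hcne : (((dA * dB - n : ℕ) : ℂ)) ≠ 0 := Nat.cast_ne_zero.mpr (Nat.sub_pos_of_lt hn).ne'
  have hψnorm : ∀ j, ∑ q : Fin dA × Fin dB, (starRingEnd ℂ) (ψ j q) * ψ j q = 1 := by
    intro j; simpa using horthonormal j j
  -- trace of ρ is 1
  have htr1 : ∑ q : Fin dA × Fin dB, ρ q q = 1 := by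
    rw [hρ, tr_expand]
    simp only [hψnorm, Finset.sum_const, Finset.card_univ, Fintype.card_fin, nsmul_eq_mul,
      mul_one, Fintype.card_prod]
    rw [inv_mul_eq_one₀ hcne]
    push_cast [Nat.cast_sub hn.le]
    ring
  -- trace via the decomposition
  have htr2 : ∑ q : Fin dA × Fin dB, ρ q q
      = ∑ i, (p i : ℂ) * ∑ q, (starRingEnd ℂ) (v i q) * v i q := by
    rw [hdec]; exact tr_dec _ _
  have hvnorm : ∀ i, ∑ q : Fin dA × Fin dB, (starRingEnd ℂ) (v i q) * v i q
      = ((∑ q : Fin dA × Fin dB, Complex.normSq (v i q) : ℝ) : ℂ) := by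
    intro i
    push_cast
    exact Finset.sum_congr rfl fun q _ => (Complex.normSq_eq_conj_mul_self).symm
  have htrR : ∑ i, (p i * ∑ q : Fin dA × Fin dB, Complex.normSq (v i q)) = (1 : ℝ) := by
    have := htr2.symm.trans htr1
    simp only [hvnorm] at this
    exact_mod_cast this
  have hex : ∃ i, p i * ∑ q : Fin dA × Fin dB, Complex.normSq (v i q) ≠ 0 := by
    by_contra h
    push_neg at h
    rw [Finset.sum_eq_zero (fun i _ => h i)] at htrR
    exact one_ne_zero htrR.symm
  obtain ⟨i₀, hi₀⟩ := hex
  have hpi₀ : 0 < p i₀ := lt_of_le_of_ne (hp i₀) fun h => hi₀ (by rw [← h, zero_mul])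
  have hvne : ∃ q : Fin dA × Fin dB, v i₀ q ≠ 0 := by
    by_contra h
    push_neg at h
    exact hi₀ (by simp [h])
  obtain ⟨q₀, hq₀⟩ := hvne
  -- the quadratic form ψ_j† ρ ψ_j vanishes
  have hz : ∀ j, (∑ Q : Fin dA × Fin dB, (starRingEnd ℂ) (v i₀ Q) * ψ j Q) = 0 := by
    intro j
    have hQ0 : ∑ P : Fin dA × Fin dB, ∑ Q : Fin dA × Fin dB,
        (starRingEnd ℂ) (ψ j P) * ρ P Q * ψ j Q = 0 := by
      rw [hρ, quad_expand]
      have hkj : ∀ k : Fin n, (∑ q : Fin dA × Fin dB, (starRingEnd ℂ) (ψ k q) * ψ j q)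
          = if j = k then 1 else 0 := by
        intro k; rw [horthonormal k j, eq_comm]
        simp [eq_comm]
      simp only [horthonormal, hkj, hψnorm j]
      simp [ite_mul, mul_ite]
    have hQdec : ∑ P : Fin dA × Fin dB, ∑ Q : Fin dA × Fin dB,
        (starRingEnd ℂ) (ψ j P) * ρ P Q * ψ j Q
        = ∑ i, ((p i * Complex.normSq (∑ Q : Fin dA × Fin dB,
            (starRingEnd ℂ) (v i Q) * ψ j Q) : ℝ) : ℂ) := by
      rw [hdec, quad_dec]
      refine Finset.sum_congr rfl fun i _ => ?_
      have hconj : (∑ P : Fin dA × Fin dB, (starRingEnd ℂ) (ψ j P) * v i P)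
          = (starRingEnd ℂ) (∑ Q : Fin dA × Fin dB, (starRingEnd ℂ) (v i Q) * ψ j Q) := by
        rw [map_sum]
        exact Finset.sum_congr rfl fun P _ => by simp [mul_comm]
      rw [hconj, ← Complex.normSq_eq_conj_mul_self]
      push_cast
      ring
    have hR : ∑ i, (p i * Complex.normSq (∑ Q : Fin dA × Fin dB,
        (starRingEnd ℂ) (v i Q) * ψ j Q)) = (0 : ℝ) := by
      have := hQdec.symm.trans hQ0
      exact_mod_cast this
    have hall := (Finset.sum_eq_zero_iff_of_nonneg (fun i _ =>
        mul_nonneg (hp i) (Complex.normSq_nonneg _))).mp hR i₀ (Finset.mem_univ _)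
    have : Complex.normSq (∑ Q : Fin dA × Fin dB, (starRingEnd ℂ) (v i₀ Q) * ψ j Q) = 0 := by
      rcases mul_eq_zero.mp hall with h | h
      · exact absurd h hpi₀.ne'
      · exact h
    exact Complex.normSq_eq_zero.mp this
  -- factorize and contradict unextendibility
  refine hupb ⟨a i₀, b i₀, ?_, ?_, ?_⟩
  · intro h
    apply hq₀
    show a i₀ q₀.1 * b i₀ q₀.2 = 0
    rw [show a i₀ q₀.1 = 0 from by rw [h]; rfl, zero_mul]
  · intro h
    apply hq₀
    show a i₀ q₀.1 * b i₀ q₀.2 = 0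
    rw [show b i₀ q₀.2 = 0 from by rw [h]; rfl, mul_zero]
  · intro j
    have hfact : (∑ Q : Fin dA × Fin dB, (starRingEnd ℂ) (v i₀ Q) * ψ j Q)
        = (∑ x, (starRingEnd ℂ) (a i₀ x) * α j x) * (∑ y, (starRingEnd ℂ) (b i₀ y) * β j y) := by
      rw [Finset.sum_mul_sum, Fintype.sum_prod_type]
      refine Finset.sum_congr rfl fun x _ => Finset.sum_congr rfl fun y _ => ?_
      rw [hψ j (x, y)]
      simp only [hv]
      ring_nf
      rw [map_mul]
      ring
    have := hz j
    rw [hfact] at this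
    rcases mul_eq_zero.mp this with h | h
    · left
      rw [show (inner ℂ (a i₀) (α j) : ℂ) = ∑ x, (starRingEnd ℂ) (a i₀ x) * α j x from by
        simp [PiLp.inner_apply, RCLike.inner_apply', mul_comm]]
      exact h
    · right
      rw [show (inner ℂ (b i₀) (β j) : ℂ) = ∑ y, (starRingEnd ℂ) (b i₀ y) * β j y from by
        simp [PiLp.inner_apply, RCLike.inner_apply', mul_comm]]
      exact h
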